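/- For every positive integer L, the identity Σ_{n≥1} (q^{2n}/(1−q^n)) · C(L+n−1, n−1)_q = (1/(1−q^L)) · (1/(q²;q)_L − 1) holds, where C(m,k)_q denotes the Gaussian binomial coefficient. -/

import Mathlib

open PowerSeries

/-- `(q^s; q)_n` as a formal power series in `q = X` over `ℚ`. -/
noncomputable def qp (s n : ℕ) : PowerSeries ℚ :=
  ∏ i ∈ Finset.range n, (1 - (X : PowerSeries ℚ) ^ (s + i))

/-- The Gaussian binomial coefficient `C(m, k)_q = (q;q)_m / ((q;q)_k (q;q)_{m-k})`. -/
noncomputable def gb (m k : ℕ) : PowerSeries ℚ := qp 1 m * (qp 1 k)⁻¹ * (qp 1 (m - k))⁻¹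

namespace QBin
open Finset
section
variable {K : Type*} [Field K]
variable (x : K) (hx : ∀ m : ℕ, 1 ≤ m → (1 : K) - x ^ m ≠ 0)

noncomputable def Qp (s n : ℕ) : K := ∏ i ∈ Finset.range n, (1 - x ^ (s + i))

noncomputable def GB (m k : ℕ) : K := Qp x 1 m / (Qp x 1 k * Qp x 1 (m - k))

include hx in
lemma Qp_ne (s n : ℕ) (hs : 1 ≤ s) : Qp x s n ≠ 0 := by
  apply Finset.prod_ne_zero_iff.mpr
  intro i _
  exact hx (s + i) (by omega)

lemma Qp_zero (s : ℕ) : Qp x s 0 = 1 := by simp [Qp]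

lemma Qp_succ (s n : ℕ) : Qp x s (n + 1) = Qp x s n * (1 - x ^ (s + n)) := by
  simp [Qp, Finset.prod_range_succ]

lemma Qp_add (s a b : ℕ) : Qp x s (a + b) = Qp x s a * Qp x (s + a) b := by
  rw [Qp, Qp, Qp, Finset.prod_range_add]
  congr 1
  exact Finset.prod_congr rfl fun i _ => by ring_nf

include hx in
lemma GB_zero (m : ℕ) : GB x m 0 = 1 := by
  rw [GB, Nat.sub_zero, Qp_zero, one_mul, div_self (Qp_ne x hx 1 m le_rfl)]

include hx in
lemma GB_self (m : ℕ) : GB x m m = 1 := by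
  rw [GB, Nat.sub_self, Qp_zero, mul_one, div_self (Qp_ne x hx 1 m le_rfl)]

include hx in
lemma GB_pascal (a b : ℕ) (h : b < a) :
    GB x (a + 1) (b + 1) = GB x a b + x ^ (b + 1) * GB x a (b + 1) := by
  have h1 : a + 1 - (b + 1) = a - b := by omega
  have h2 : a - b = (a - (b + 1)) + 1 := by omega
  rw [GB, GB, GB, h1, h2, Qp_succ, Qp_succ, Qp_succ]
  have e1 : 1 + (a - (b + 1)) = a - b := by omega
  have e2 : 1 + b = b + 1 := by omega
  have e3 : 1 + a = a + 1 := by omega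
  rw [e1, e2, e3]
  have nb := Qp_ne x hx 1 b le_rfl
  have nb1 : (1:K) - x ^ (b+1) ≠ 0 := hx _ (by omega)
  have nab : Qp x 1 (a - (b+1)) ≠ 0 := Qp_ne x hx 1 _ le_rfl
  have nab1 : (1:K) - x ^ (a - b) ≠ 0 := hx _ (by omega)
  have key : x ^ (b+1) * x ^ (a - b) = x ^ (a+1) := by
    rw [← pow_add]; congr 1; omega
  field_simp
  linear_combination (Qp x 1 a) * key

lemma choose_succ_two (k : ℕ) : (k+1).choose 2 = k.choose 2 + k := by
  simp [Nat.choose_succ_succ, Nat.choose_one_right, Nat.add_comm]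

include hx in
lemma qbt (m : ℕ) : ∀ y : K,
    ∏ i ∈ range m, (1 - y * x ^ i) =
      ∑ k ∈ range (m + 1), (-1 : K) ^ k * x ^ (k.choose 2) * y ^ k * GB x m k := by
  induction m with
  | zero =>
    intro y
    simp [GB_zero x hx 0]
  | succ m ih =>
    intro y
    have lhs_eq : ∏ i ∈ range (m+1), (1 - y * x ^ i)
        = (1 - y) * ∏ i ∈ range m, (1 - (y*x) * x ^ i) := by
      rw [Finset.prod_range_succ']
      simp only [pow_zero, mul_one]
      rw [mul_comm]
      congr 1
      exact Finset.prod_congr rfl fun i _ => by ring_nf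
    rw [lhs_eq, ih (y*x)]
    set F : ℕ → K := fun k => (-1 : K) ^ k * x ^ (k.choose 2) * y ^ k with hF
    have hFs : ∀ k, F (k+1) = -y * x ^ k * F k := by
      intro k
      simp only [hF, choose_succ_two, pow_add, pow_succ]
      ring
    have hterm : ∀ k, (-1 : K) ^ k * x ^ (k.choose 2) * (y*x) ^ k = F k * x ^ k := by
      intro k
      simp only [hF, mul_pow]
      ring
    -- RHS of goal
    have rhs_eq : ∑ k ∈ range (m + 2), (-1 : K) ^ k * x ^ (k.choose 2) * y ^ k * GB x (m+1) k
        = ∑ k ∈ range (m + 2), F k * GB x (m+1) k := rfl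
    have key1 : ∑ k ∈ range (m + 2), F k * GB x (m+1) k
        = (∑ k ∈ range (m+1), F (k+1) * GB x (m+1) (k+1)) + F 0 * GB x (m+1) 0 :=
      Finset.sum_range_succ' _ _
    have key2 : ∑ k ∈ range (m+1), F (k+1) * GB x (m+1) (k+1)
        = (∑ k ∈ range m, F (k+1) * (GB x m k + x^(k+1) * GB x m (k+1))) + F (m+1) * 1 := by
      rw [Finset.sum_range_succ, GB_self x hx]
      congr 1
      exact Finset.sum_congr rfl fun k hk => by
        rw [GB_pascal x hx m k (Finset.mem_range.mp hk)]
    have split : ∑ k ∈ range m, F (k+1) * (GB x m k + x^(k+1) * GB x m (k+1))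
        = (∑ k ∈ range m, F (k+1) * GB x m k) + ∑ k ∈ range m, F (k+1) * x^(k+1) * GB x m (k+1) := by
      rw [← Finset.sum_add_distrib]
      exact Finset.sum_congr rfl fun k _ => by ring
    have A : (∑ k ∈ range m, F (k+1) * GB x m k) + F (m+1) * 1
        = ∑ k ∈ range (m+1), F (k+1) * GB x m k := by
      rw [Finset.sum_range_succ, GB_self x hx]
    have B : (∑ k ∈ range m, F (k+1) * x^(k+1) * GB x m (k+1)) + F 0 * GB x (m+1) 0
        = ∑ k ∈ range (m+1), F k * x^k * GB x m k := by
      rw [Finset.sum_range_succ' (fun k => F k * x^k * GB x m k), GB_zero x hx, GB_zero x hx]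
      simp
    have C : ∑ k ∈ range (m+1), F (k+1) * GB x m k
        = -y * ∑ k ∈ range (m+1), F k * x^k * GB x m k := by
      rw [Finset.mul_sum]
      exact Finset.sum_congr rfl fun k _ => by rw [hFs k]; ring
    calc (1 - y) * ∑ k ∈ range (m + 1), (-1:K) ^ k * x ^ (k.choose 2) * (y*x) ^ k * GB x m k
        = (1 - y) * ∑ k ∈ range (m + 1), F k * x ^ k * GB x m k := by
          congr 1
          exact Finset.sum_congr rfl fun k _ => by rw [hterm k]
      _ = (∑ k ∈ range (m+1), F k * x^k * GB x m k)
            + (-y * ∑ k ∈ range (m+1), F k * x^k * GB x m k) := by ring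
      _ = ∑ k ∈ range (m + 2), F k * GB x (m+1) k := by
          rw [key1, key2, split, ← C, ← B, ← A]; ring
      _ = _ := rfl

include hx in
lemma GBtrans (a k : ℕ) (hk : k ≤ a) :
    (1 - x^(a+1)) * (1 - x^(a+2)) * GB x a k
      = (1 - x^(k+1)) * (1 - x^(k+2)) * GB x (a+2) (k+2) := by
  have h1 : a + 2 - (k + 2) = a - k := by omega
  rw [GB, GB, h1]
  have e1 : Qp x 1 (a+2) = Qp x 1 a * ((1 - x^(a+1)) * (1 - x^(a+2))) := by
    rw [Qp_succ x, Qp_succ x]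
    have : 1 + (a+1) = a + 2 := by omega
    have : (1:ℕ) + a = a + 1 := by omega
    rw [show 1 + (a+1) = a + 2 by omega, show 1 + a = a + 1 by omega]
    ring
  have e2 : Qp x 1 (k+2) = Qp x 1 k * ((1 - x^(k+1)) * (1 - x^(k+2))) := by
    rw [Qp_succ x, Qp_succ x, show 1 + (k+1) = k + 2 by omega, show 1 + k = k + 1 by omega]
    ring
  rw [e1, e2]
  have n1 : Qp x 1 a ≠ 0 := Qp_ne x hx 1 a le_rfl
  have n2 : Qp x 1 k ≠ 0 := Qp_ne x hx 1 k le_rfl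
  have n3 : Qp x 1 (a - k) ≠ 0 := Qp_ne x hx 1 (a-k) le_rfl
  have n4 : (1:K) - x^(k+1) ≠ 0 := hx _ (by omega)
  have n5 : (1:K) - x^(k+2) ≠ 0 := hx _ (by omega)
  field_simp

noncomputable def AA (L k : ℕ) : K :=
  (-1 : K)^(k+1) * x^(k.choose 2 + 2*k + 2) * (1 - x^L) * (1 - x^(L+1)) * GB x (L-1) k
    / ((1 - x) * (1 - x^(k+2)))

noncomputable def RR (L N : ℕ) : K := ∑ k ∈ range L, AA x L k * x^((k+2)*N)

lemma choose_add_two (k : ℕ) : (k+2).choose 2 = k.choose 2 + 2*k + 1 := by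
  rw [show k+2 = (k+1)+1 by omega, choose_succ_two, choose_succ_two]; omega

include hx in
lemma RR_zero (L : ℕ) (hL : 1 ≤ L) : RR x L 0 = Qp x 2 L - 1 := by
  have hx1 : (1:K) - x ≠ 0 := by simpa using hx 1 le_rfl
  set g : ℕ → K := fun j => (-1:K)^j * x^(j.choose 2) * GB x (L+1) j with hg
  set h : ℕ → K := fun j => (-1:K)^j * x^(j.choose 2 + j) * GB x (L+1) j with hh
  have sum_g : ∑ j ∈ range (L+2), g j = 0 := by
    have h2 := (qbt x hx (L+1) (1:K))
    simp only [one_pow, mul_one] at h2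
    have h3 : ∏ i ∈ range (L+1), (1 - (1:K) * x ^ i) = 0 := by
      apply Finset.prod_eq_zero (Finset.mem_range.mpr (by omega : 0 < L+1))
      simp
    rw [h3] at h2
    rw [hg]
    simp only [mul_one, one_pow]
    exact h2.symm
  have sum_h : ∑ j ∈ range (L+2), h j = Qp x 1 (L+1) := by
    have h2 := qbt x hx (L+1) x
    have h4 : ∑ j ∈ range (L+1+1), h j
        = ∑ k ∈ range (L+1+1), (-1:K)^k * x^(k.choose 2) * x^k * GB x (L+1) k :=
      Finset.sum_congr rfl fun j _ => by rw [hh]; simp only []; rw [pow_add]; ring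
    rw [show L+2 = L+1+1 from rfl, h4, ← h2, Qp]
    exact Finset.prod_congr rfl fun i _ => by rw [pow_add, pow_one]
  have term_eq : ∀ k ∈ range L, (1 - x) * (AA x L k * x^((k+2)*0)) = -x * g (k+2) + h (k+2) := by
    intro k hk
    have hkL : k < L := Finset.mem_range.mp hk
    have n5 : (1:K) - x^(k+2) ≠ 0 := hx _ (by omega)
    have htr : (1 - x^L) * (1 - x^(L+1)) * GB x (L-1) k
        = (1 - x^(k+1)) * (1 - x^(k+2)) * GB x (L+1) (k+2) := by
      have h5 := GBtrans x hx (L-1) k (by omega)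
      rw [show L-1+1 = L by omega, show L-1+2 = L+1 by omega] at h5
      exact h5
    rw [hg, hh, AA]
    simp only [Nat.mul_zero, pow_zero, mul_one, choose_add_two]
    field_simp
    linear_combination (-(-1:K)^k * x^(k.choose 2 + 2*k + 2)) * htr
  have peel : ∀ f : ℕ → K, ∑ k ∈ range L, f (k+2) = (∑ j ∈ range (L+2), f j) - f 1 - f 0 := by
    intro f
    have p1 : ∑ j ∈ range (L+2), f j = (∑ j ∈ range (L+1), f (j+1)) + f 0 :=
      Finset.sum_range_succ' f (L+1)
    have p2 : ∑ j ∈ range (L+1), f (j+1) = (∑ j ∈ range L, f (j+1+1)) + f 1 :=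
      Finset.sum_range_succ' (fun j => f (j+1)) L
    rw [p1, p2]
    have p3 : (∑ j ∈ range L, f (j+1+1)) = ∑ j ∈ range L, f (j+2) := rfl
    rw [p3]
    ring
  have main : (1 - x) * RR x L 0 = x + Qp x 1 (L+1) - 1 := by
    rw [RR, Finset.mul_sum, Finset.sum_congr rfl term_eq, Finset.sum_add_distrib,
      ← Finset.mul_sum, peel (fun j => g j), peel (fun j => h j), sum_g, sum_h]
    have g0 : g 0 = 1 := by rw [hg]; simp [GB_zero x hx]
    have g1 : g 1 = -GB x (L+1) 1 := by rw [hg]; simp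
    have h0 : h 0 = 1 := by rw [hh]; simp [GB_zero x hx]
    have h1 : h 1 = -(x * GB x (L+1) 1) := by rw [hh]; simp
    rw [g0, g1, h0, h1]
    ring
  have hQ : Qp x 1 (L+1) = (1 - x) * Qp x 2 L := by
    rw [show L+1 = 1+L by omega, Qp_add x 1 1 L]
    congr 1
    rw [Qp_succ x 1 0, Qp_zero x]
    norm_num
  have : (1 - x) * RR x L 0 = (1 - x) * (Qp x 2 L - 1) := by
    rw [main, hQ]; ring
  exact mul_left_cancel₀ hx1 this

lemma Qp_one_succ (L : ℕ) : Qp x 1 (L+1) = (1 - x) * Qp x 2 L := by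
  rw [show L+1 = 1+L by omega, Qp_add x 1 1 L]
  congr 1
  rw [Qp_succ x 1 0, Qp_zero x]
  norm_num

include hx in
lemma RR_step (L N : ℕ) (hL : 1 ≤ L) :
    RR x L (N+1) - RR x L N
      = (x^(2*(N+1)) / (1 - x^(N+1)) * GB x (L+N) N) * ((1 - x^L) * Qp x 2 L) := by
  have hx1 : (1:K) - x ≠ 0 := by simpa using hx 1 le_rfl
  have hxN : (1:K) - x^(N+1) ≠ 0 := hx _ (by omega)
  -- RHS closed form
  have hGB : GB x (L+N) N = Qp x 1 (L+N) / (Qp x 1 N * Qp x 1 L) := by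
    rw [GB, show L+N-N = L by omega]
  have hsplit : Qp x 1 (L+N) = Qp x 1 (N+1) * Qp x (N+2) (L-1) := by
    rw [show L+N = (N+1)+(L-1) by omega, Qp_add x, show (1:ℕ)+(N+1) = N+2 by omega]
  have hN1 : Qp x 1 (N+1) = Qp x 1 N * (1 - x^(N+1)) := by
    rw [Qp_succ x, show 1+N = N+1 by omega]
  have rhs_eq : (x^(2*(N+1)) / (1 - x^(N+1)) * GB x (L+N) N) * ((1 - x^L) * Qp x 2 L)
      = (x^(2*N+2) * (1 - x^L) * (1 - x^(L+1)) / (1 - x)) * Qp x (N+2) (L-1) := by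
    have hL1 : Qp x 1 (L+1) = Qp x 1 L * (1 - x^(L+1)) := by
      rw [Qp_succ x, show 1+L = L+1 by omega]
    have hQ2 : Qp x 2 L = Qp x 1 L * (1 - x^(L+1)) / (1 - x) := by
      rw [← hL1, Qp_one_succ]
      field_simp
    rw [hGB, hsplit, hN1, hQ2, show 2*(N+1) = 2*N+2 by omega]
    have n1 : Qp x 1 N ≠ 0 := Qp_ne x hx 1 N le_rfl
    have n2 : Qp x 1 L ≠ 0 := Qp_ne x hx 1 L le_rfl
    field_simp
  have qbtL : Qp x (N+2) (L-1)
      = ∑ k ∈ range L, (-1:K)^k * x^(k.choose 2) * (x^(N+2))^k * GB x (L-1) k := by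
    have h2 := qbt x hx (L-1) (x^(N+2))
    rw [show L-1+1 = L by omega] at h2
    rw [← h2, Qp]
    exact Finset.prod_congr rfl fun i _ => by rw [pow_add]
  have term_eq : ∀ k ∈ range L,
      AA x L k * x^((k+2)*(N+1)) - AA x L k * x^((k+2)*N)
        = (x^(2*N+2) * (1 - x^L) * (1 - x^(L+1)) / (1 - x))
            * ((-1:K)^k * x^(k.choose 2) * (x^(N+2))^k * GB x (L-1) k) := by
    intro k hk
    have n5 : (1:K) - x^(k+2) ≠ 0 := hx _ (by omega)
    have h1 : x^((k+2)*(N+1)) = x^((k+2)*N) * (x^k * x^2) := by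
      rw [← pow_add, ← pow_add]; congr 1 <;> ring
    have h3 : (x^(N+2))^k = x^(k*N) * (x^k)^2 := by
      rw [← pow_mul, ← pow_mul, ← pow_add]; congr 1 <;> ring
    have h4 : x^(k.choose 2 + 2*k + 2) = x^(k.choose 2) * (x^k)^2 * x^2 := by
      rw [← pow_mul, ← pow_add, ← pow_add]; congr 1 <;> ring
    have h5 : x^((k+2)*N) = x^(k*N) * (x^N)^2 := by
      rw [← pow_mul, ← pow_add]; congr 1 <;> ring
    have h6 : x^(2*N+2) = (x^N)^2 * x^2 := by
      rw [← pow_mul, ← pow_add]; congr 1 <;> ring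
    have h7 : x^(k+2) = x^k * x^2 := by rw [← pow_add]
    rw [AA, h1, h3, h4, h5, h6, h7]
    rw [h7] at n5
    field_simp
    ring
  calc RR x L (N+1) - RR x L N
      = ∑ k ∈ range L, (AA x L k * x^((k+2)*(N+1)) - AA x L k * x^((k+2)*N)) := by
        rw [RR, RR, ← Finset.sum_sub_distrib]
    _ = ∑ k ∈ range L, (x^(2*N+2) * (1 - x^L) * (1 - x^(L+1)) / (1 - x))
            * ((-1:K)^k * x^(k.choose 2) * (x^(N+2))^k * GB x (L-1) k) :=
        Finset.sum_congr rfl term_eq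
    _ = (x^(2*N+2) * (1 - x^L) * (1 - x^(L+1)) / (1 - x)) * Qp x (N+2) (L-1) := by
        rw [qbtL, Finset.mul_sum]
    _ = _ := by rw [rhs_eq]

noncomputable def TT (L n : ℕ) : K := x^(2*n) / (1 - x^n) * GB x (L+n-1) (n-1)

include hx in
lemma MAIN (L : ℕ) (hL : 1 ≤ L) (N : ℕ) :
    (∑ n ∈ Finset.Icc 1 N, TT x L n) * ((1 - x^L) * Qp x 2 L)
      = 1 - Qp x 2 L + RR x L N := by
  induction N with
  | zero =>
    rw [show Finset.Icc 1 0 = (∅ : Finset ℕ) from rfl, Finset.sum_empty, zero_mul,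
      RR_zero x hx L hL]
    ring
  | succ N ih =>
    rw [Finset.sum_Icc_succ_top (by omega : 1 ≤ N+1), add_mul, ih]
    have hstep := RR_step x hx L N hL
    have hTT : TT x L (N+1) = x^(2*(N+1)) / (1 - x^(N+1)) * GB x (L+N) N := by
      rw [TT, show L+(N+1)-1 = L+N by omega, show N+1-1 = N by omega]
    rw [hTT]
    linear_combination -hstep

noncomputable def rho (L N : ℕ) : K :=
  ∑ k ∈ range L, (-1:K)^(k+1) * x^(k.choose 2 + 2*k + k*N) * (1 - x^L) * (1 - x^(L+1))
    * GB x (L-1) k * ((1 - x) * (1 - x^(k+2)))⁻¹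

lemma RR_eq_rho (L N : ℕ) : RR x L N = x^(2*N+2) * rho x L N := by
  rw [RR, rho, Finset.mul_sum]
  refine Finset.sum_congr rfl fun k _ => ?_
  have hp : x^(k.choose 2 + 2*k + 2) * x^((k+2)*N)
      = x^(2*N+2) * x^(k.choose 2 + 2*k + k*N) := by
    rw [← pow_add, ← pow_add]; congr 1; ring
  rw [AA, div_eq_mul_inv]
  linear_combination ((-1:K)^(k+1) * (1-x^L) * (1-x^(L+1)) * GB x (L-1) k
    * ((1-x)*(1-x^(k+2)))⁻¹) * hp

include hx in
lemma FINAL (L : ℕ) (hL : 1 ≤ L) (N : ℕ) :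
    ∑ n ∈ Finset.Icc 1 N, TT x L n
      = (1 - x^L)⁻¹ * ((Qp x 2 L)⁻¹ - 1)
        + x^(2*N+2) * ((1 - x^L) * Qp x 2 L)⁻¹ * rho x L N := by
  have hxL : (1:K) - x^L ≠ 0 := hx L hL
  have hQ : Qp x 2 L ≠ 0 := Qp_ne x hx 2 L (by omega)
  have hD : ((1:K) - x^L) * Qp x 2 L ≠ 0 := mul_ne_zero hxL hQ
  have hmain := MAIN x hx L hL N
  rw [RR_eq_rho] at hmain
  have hS : ∑ n ∈ Finset.Icc 1 N, TT x L n
      = (1 - Qp x 2 L + x^(2*N+2) * rho x L N) * (((1 - x^L) * Qp x 2 L))⁻¹ := by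
    rw [← hmain, mul_assoc, mul_inv_cancel₀ hD, mul_one]
  rw [hS]
  field_simp

end
end QBin
namespace Stmt13Aux
open Finset QBin

abbrev K := LaurentSeries ℚ

noncomputable def φ : PowerSeries ℚ →+* K := HahnSeries.ofPowerSeries ℤ ℚ

noncomputable def xx : K := φ PowerSeries.X

lemma hinj : Function.Injective φ := HahnSeries.ofPowerSeries_injective

lemma cc_one_sub_X_pow (m : ℕ) (hm : 1 ≤ m) :
    constantCoeff (1 - (X : PowerSeries ℚ) ^ m) = 1 := by
  simp [zero_pow (by omega : m ≠ 0)]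

lemma hx : ∀ m : ℕ, 1 ≤ m → (1 : K) - xx ^ m ≠ 0 := by
  intro m hm
  have h : (1 : K) - xx ^ m = φ (1 - (X : PowerSeries ℚ) ^ m) := by
    simp [xx, map_sub, map_pow]
  rw [h]
  intro h0
  have h1 : (1 - (X : PowerSeries ℚ) ^ m) = 0 := hinj (by simpa using h0)
  have h2 := congrArg (constantCoeff) h1
  rw [cc_one_sub_X_pow m hm] at h2
  simp at h2

lemma phi_qp (s n : ℕ) : φ (qp s n) = Qp xx s n := by
  rw [qp, Qp, map_prod]
  exact Finset.prod_congr rfl fun i _ => by simp [xx, map_sub, map_pow]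

lemma cc_qp (s n : ℕ) (hs : 1 ≤ s) : constantCoeff (qp s n) = 1 := by
  rw [qp, map_prod]
  exact Finset.prod_eq_one fun i _ => cc_one_sub_X_pow (s + i) (by omega)

lemma phi_inv (f : PowerSeries ℚ) (h : constantCoeff f ≠ 0) : φ f⁻¹ = (φ f)⁻¹ := by
  have h1 : f * f⁻¹ = 1 := PowerSeries.mul_inv_cancel f h
  have h2 : φ f * φ f⁻¹ = 1 := by rw [← map_mul, h1, map_one]
  exact eq_inv_of_mul_eq_one_right h2

lemma phi_gb (m k : ℕ) : φ (gb m k) = GB xx m k := by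
  rw [gb, GB, map_mul, map_mul, phi_qp, phi_inv _ (by rw [cc_qp 1 k le_rfl]; norm_num),
    phi_inv _ (by rw [cc_qp 1 (m-k) le_rfl]; norm_num), phi_qp, phi_qp, div_eq_mul_inv,
    mul_inv]
  ring

lemma phi_one_sub_pow (m : ℕ) : φ (1 - (X : PowerSeries ℚ) ^ m) = 1 - xx ^ m := by
  simp [xx, map_sub, map_pow]

lemma phi_inv_one_sub_pow (m : ℕ) (hm : 1 ≤ m) :
    φ ((1 - (X : PowerSeries ℚ) ^ m)⁻¹) = (1 - xx ^ m)⁻¹ := by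
  rw [phi_inv _ (by rw [cc_one_sub_X_pow m hm]; norm_num), phi_one_sub_pow]

/-- The power series `G` such that the truncation error is `X^(2N+2) * D⁻¹ * G`. -/
noncomputable def Gps (L N : ℕ) : PowerSeries ℚ :=
  ∑ k ∈ Finset.range L,
    (-1 : PowerSeries ℚ)^(k+1) * X^(k.choose 2 + 2*k + k*N) * (1 - X^L) * (1 - X^(L+1))
      * gb (L-1) k * ((1 - X) * (1 - X^(k+2)))⁻¹

lemma phi_Gps (L N : ℕ) : φ (Gps L N) = rho xx L N := by
  rw [Gps, rho, map_sum]
  refine Finset.sum_congr rfl fun k _ => ?_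
  have hpair : φ (((1 - (X:PowerSeries ℚ)) * (1 - X^(k+2)))⁻¹)
      = ((1 - xx) * (1 - xx^(k+2)))⁻¹ := by
    rw [phi_inv]
    · rw [map_mul, phi_one_sub_pow]
      have h1 : φ (1 - (X : PowerSeries ℚ)) = 1 - xx := by
        simp [xx, map_sub]
      rw [h1]
    · rw [map_mul]
      have c1 : constantCoeff (1 - (X:PowerSeries ℚ)) = 1 := by simp
      have c2 := cc_one_sub_X_pow (k+2) (by omega)
      rw [c1, c2]; norm_num
  rw [map_mul, map_mul, map_mul, map_mul, map_mul, map_pow, map_neg, map_one, map_pow,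
    phi_gb, hpair, phi_one_sub_pow, phi_one_sub_pow]
  rfl

lemma PSmain (L : ℕ) (hL : 1 ≤ L) (N : ℕ) :
    (∑ n ∈ Finset.Icc 1 N, (X : PowerSeries ℚ)^(2*n) * (1 - X^n)⁻¹ * gb (L+n-1) (n-1))
      = (1 - (X : PowerSeries ℚ)^L)⁻¹ * ((qp 2 L)⁻¹ - 1)
        + X^(2*N+2) * (((1 - X^L) * qp 2 L)⁻¹ * Gps L N) := by
  apply hinj
  have hccD : constantCoeff ((1 - (X:PowerSeries ℚ)^L) * qp 2 L) ≠ 0 := by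
    rw [map_mul, cc_one_sub_X_pow L hL, cc_qp 2 L (by omega)]; norm_num
  rw [map_sum, map_add, map_mul, map_mul, map_sub, map_one, map_mul, map_pow,
    phi_inv_one_sub_pow L hL, phi_inv _ (by rw [cc_qp 2 L (by omega)]; norm_num),
    phi_inv _ hccD, map_mul, phi_one_sub_pow, phi_qp, phi_Gps,
    show φ (X:PowerSeries ℚ) = xx from rfl]
  have hterm : ∀ n ∈ Finset.Icc 1 N,
      φ ((X : PowerSeries ℚ)^(2*n) * (1 - X^n)⁻¹ * gb (L+n-1) (n-1)) = TT xx L n := by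
    intro n hn
    have hn1 : 1 ≤ n := (Finset.mem_Icc.mp hn).1
    rw [map_mul, map_mul, map_pow, phi_inv_one_sub_pow n hn1, phi_gb, TT, div_eq_mul_inv]
    rfl
  rw [Finset.sum_congr rfl hterm, QBin.FINAL xx hx L hL N]
  ring

end Stmt13Aux

open Stmt13Aux in
/-- For `L ≥ 1`, `Σ_{n ≥ 1} (q^{2n}/(1-q^n)) C(L+n-1, n-1)_q = (1/(1-q^L))(1/(q²;q)_L - 1)`.
Since the summand indexed by `n` has order at least `2n` in `q`, the coefficient of `q^N`
of the series equals the finite sum over `1 ≤ n ≤ N`. -/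
theorem stmt13 (L : ℕ) (hL : 1 ≤ L) (N : ℕ) :
    ∑ n ∈ Finset.Icc 1 N,
        coeff N ((X : PowerSeries ℚ) ^ (2 * n) * (1 - X ^ n)⁻¹ * gb (L + n - 1) (n - 1))
      = coeff N ((1 - (X : PowerSeries ℚ) ^ L)⁻¹ * ((qp 2 L)⁻¹ - 1)) := by
  have h1 : ∑ n ∈ Finset.Icc 1 N,
        coeff N ((X : PowerSeries ℚ) ^ (2 * n) * (1 - X ^ n)⁻¹ * gb (L + n - 1) (n - 1))
      = coeff N (∑ n ∈ Finset.Icc 1 N,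
          (X : PowerSeries ℚ) ^ (2 * n) * (1 - X ^ n)⁻¹ * gb (L + n - 1) (n - 1)) :=
    (map_sum _ _ _).symm
  rw [h1, PSmain L hL N, map_add]
  have h2 : coeff N ((X : PowerSeries ℚ)^(2*N+2)
      * (((1 - X^L) * qp 2 L)⁻¹ * Gps L N)) = 0 := by
    rw [PowerSeries.coeff_X_pow_mul']
    simp [show ¬(2*N+2 ≤ N) by omega]
  rw [h2, add_zero]
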